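/- Let (X, μ) and (Z, ν) be measure spaces with σ-finite measures, π a probability vector, P^{S,1},…,P^{S,K}, P^T probability measures on X with densities w.r.t. μ and labeling functions f^{S,1},…,f^{S,K}, f^T : X → Y_Δ, g : X → Z measurable such that each g_#P^{S,k} and g_#P^T has a density w.r.t. ν, and ĥ : Z → Y_Δ measurable. Let a ∈ Y_Δ be the source-mixture label marginal with a_y = Σ_{k=1}^K π_k ∫ f^{S,k}(x,y) p^{S,k}(x) dμ(x), and b ∈ Y_Δ the target label marginal with b_y = ∫ f^T(x,y) p^T(x) dμ(x). Then, with losses taken to be the Hellinger loss, d_{1/2}(a, b) ≤ [ Σ_{k=1}^K π_k L(ĥ∘g, f^{S,k}, P^{S,k}) ]^{1/2} + d_{1/2}( g_#P^T, Σ_{k=1}^K π_k g_#P^{S,k} ) + L(ĥ∘g, f^T, P^T)^{1/2}. -/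

import Mathlib

open MeasureTheory

open scoped NNReal ENNReal

lemma integral_sqrt_mul_sqrt_le {α : Type*} [MeasurableSpace α] (μ : Measure α) {u v : α → ℝ}
    (hum : AEStronglyMeasurable u μ) (hvm : AEStronglyMeasurable v μ)
    (hu0 : ∀ x, 0 ≤ u x) (hv0 : ∀ x, 0 ≤ v x)
    (hui : Integrable u μ) (hvi : Integrable v μ) :
    ∫ x, Real.sqrt (u x) * Real.sqrt (v x) ∂μ
      ≤ Real.sqrt (∫ x, u x ∂μ) * Real.sqrt (∫ x, v x ∂μ) := by
  have h2 : Real.HolderConjugate 2 2 := Real.HolderConjugate.two_two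
  have hsu : AEStronglyMeasurable (fun x => Real.sqrt (u x)) μ :=
    Real.continuous_sqrt.comp_aestronglyMeasurable hum
  have hsv : AEStronglyMeasurable (fun x => Real.sqrt (v x)) μ :=
    Real.continuous_sqrt.comp_aestronglyMeasurable hvm
  have mf : MemLp (fun x => Real.sqrt (u x)) (ENNReal.ofReal 2) μ := by
    rw [show ENNReal.ofReal 2 = 2 by norm_num]
    exact (memLp_two_iff_integrable_sq hsu).2
      (by simpa [Real.sq_sqrt (hu0 _)] using hui)
  have mg : MemLp (fun x => Real.sqrt (v x)) (ENNReal.ofReal 2) μ := by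
    rw [show ENNReal.ofReal 2 = 2 by norm_num]
    exact (memLp_two_iff_integrable_sq hsv).2
      (by simpa [Real.sq_sqrt (hv0 _)] using hvi)
  have key := integral_mul_le_Lp_mul_Lq_of_nonneg h2
    (Filter.Eventually.of_forall fun x => Real.sqrt_nonneg (u x))
    (Filter.Eventually.of_forall fun x => Real.sqrt_nonneg (v x)) mf mg
  have e1 : ∀ x, Real.sqrt (u x) ^ (2:ℝ) = u x := by
    intro x; rw [Real.rpow_two, Real.sq_sqrt (hu0 x)]
  have e2 : ∀ x, Real.sqrt (v x) ^ (2:ℝ) = v x := by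
    intro x; rw [Real.rpow_two, Real.sq_sqrt (hv0 x)]
  simp only [e1, e2] at key
  calc ∫ x, Real.sqrt (u x) * Real.sqrt (v x) ∂μ
      ≤ (∫ x, u x ∂μ) ^ (1/2:ℝ) * (∫ x, v x ∂μ) ^ (1/2:ℝ) := key
    _ = Real.sqrt (∫ x, u x ∂μ) * Real.sqrt (∫ x, v x ∂μ) := by
        rw [Real.sqrt_eq_rpow, Real.sqrt_eq_rpow]

lemma integrable_bdd_mul {α : Type*} [MeasurableSpace α] {μ : Measure α} {p φ : α → ℝ}
    (hp : Integrable p μ) (hp0 : ∀ x, 0 ≤ p x)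
    (hφm : AEStronglyMeasurable φ μ) {M : ℝ} (hM : 0 ≤ M) (hφ : ∀ x, |φ x| ≤ M) :
    Integrable (fun x => φ x * p x) μ := by
  refine Integrable.mono (hp.const_mul M) (hφm.mul hp.1) ?_
  refine Filter.Eventually.of_forall fun x => ?_
  rw [Real.norm_eq_abs, Real.norm_eq_abs, abs_mul]
  calc |φ x| * |p x| ≤ M * |p x| :=
        mul_le_mul_of_nonneg_right (hφ x) (abs_nonneg _)
    _ = |M * p x| := by rw [abs_mul, abs_of_nonneg hM]

lemma integrable_simplex_mul {α : Type*} [MeasurableSpace α] {μ : Measure α} {p : α → ℝ}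
    (hp : Integrable p μ) (hp0 : ∀ x, 0 ≤ p x) {φ : α → ℝ} (hφm : AEStronglyMeasurable φ μ)
    (h0 : ∀ x, 0 ≤ φ x) (h1 : ∀ x, φ x ≤ 1) :
    Integrable (fun x => φ x * p x) μ :=
  integrable_bdd_mul hp hp0 hφm zero_le_one
    (fun x => abs_le.mpr ⟨by linarith [h0 x], h1 x⟩)

lemma integral_comp_eq {X Z : Type*} [MeasurableSpace X] [MeasurableSpace Z]
    (μ : Measure X) (ν : Measure Z) {p : X → ℝ} {q : Z → ℝ} {g : X → Z}
    (hg : Measurable g) (hp : Measurable p) (hp0 : ∀ x, 0 ≤ p x)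
    (hq : Measurable q) (hq0 : ∀ z, 0 ≤ q z)
    (hmap : Measure.map g (μ.withDensity fun x => ENNReal.ofReal (p x))
      = ν.withDensity fun z => ENNReal.ofReal (q z))
    {r : Z → ℝ} (hr : Measurable r) :
    ∫ x, r (g x) * p x ∂μ = ∫ z, r z * q z ∂ν := by
  have hdp : (fun x => ENNReal.ofReal (p x))
      = fun x => (((fun x => (p x).toNNReal) x : ℝ≥0) : ℝ≥0∞) := rfl
  have hdq : (fun z => ENNReal.ofReal (q z))
      = fun z => (((fun z => (q z).toNNReal) z : ℝ≥0) : ℝ≥0∞) := rfl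
  have h1 : ∫ x, r (g x) ∂(μ.withDensity fun x => ENNReal.ofReal (p x))
      = ∫ x, r (g x) * p x ∂μ := by
    rw [hdp, integral_withDensity_eq_integral_smul (hp.real_toNNReal)]
    refine integral_congr_ae (Filter.Eventually.of_forall fun x => ?_)
    simp [NNReal.smul_def, Real.coe_toNNReal _ (hp0 x), mul_comm]
  have h2 : ∫ z, r z ∂(ν.withDensity fun z => ENNReal.ofReal (q z))
      = ∫ z, r z * q z ∂ν := by
    rw [hdq, integral_withDensity_eq_integral_smul (hq.real_toNNReal)]
    refine integral_congr_ae (Filter.Eventually.of_forall fun z => ?_)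
    simp [NNReal.smul_def, Real.coe_toNNReal _ (hq0 z), mul_comm]
  rw [← h1, ← h2, ← hmap,
    integral_map hg.aemeasurable hr.aestronglyMeasurable]

lemma single_key {A C I E : ℝ} (hA : 0 ≤ A) (hC : 0 ≤ C)
    (hI : I ≤ Real.sqrt A * Real.sqrt C) (hE : E = A + C - 2 * I) :
    (Real.sqrt A - Real.sqrt C) ^ 2 ≤ E := by
  rw [sub_sq, hE]
  rw [Real.sq_sqrt hA, Real.sq_sqrt hC]
  nlinarith

lemma mixture_key {K : ℕ} (w : Fin K → ℝ) (hw : ∀ k, 0 ≤ w k) (A C I E : Fin K → ℝ)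
    (hA : ∀ k, 0 ≤ A k) (hC : ∀ k, 0 ≤ C k)
    (hI : ∀ k, I k ≤ Real.sqrt (A k) * Real.sqrt (C k))
    (hE : ∀ k, E k = A k + C k - 2 * I k) :
    (Real.sqrt (∑ k, w k * A k) - Real.sqrt (∑ k, w k * C k)) ^ 2 ≤ ∑ k, w k * E k := by
  have key : ∑ k, w k * I k ≤ Real.sqrt (∑ k, w k * A k) * Real.sqrt (∑ k, w k * C k) := by
    have hcs := Real.sum_sqrt_mul_sqrt_le (f := fun k => w k * A k) (g := fun k => w k * C k)
      Finset.univ (fun k => mul_nonneg (hw k) (hA k)) (fun k => mul_nonneg (hw k) (hC k))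
    refine le_trans (Finset.sum_le_sum fun k _ => ?_) hcs
    rw [Real.sqrt_mul (hw k), Real.sqrt_mul (hw k)]
    calc w k * I k ≤ w k * (Real.sqrt (A k) * Real.sqrt (C k)) :=
          mul_le_mul_of_nonneg_left (hI k) (hw k)
      _ = Real.sqrt (w k) * Real.sqrt (A k) * (Real.sqrt (w k) * Real.sqrt (C k)) := by
          have h : Real.sqrt (w k) * Real.sqrt (A k) * (Real.sqrt (w k) * Real.sqrt (C k))
              = Real.sqrt (w k) * Real.sqrt (w k) * (Real.sqrt (A k) * Real.sqrt (C k)) := by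
            ring
          rw [h, Real.mul_self_sqrt (hw k)]
  have hE' : ∑ k, w k * E k = ∑ k, w k * A k + ∑ k, w k * C k - 2 * ∑ k, w k * I k := by
    rw [← Finset.sum_add_distrib, Finset.mul_sum, ← Finset.sum_sub_distrib]
    exact Finset.sum_congr rfl fun k _ => by rw [hE k]; ring
  exact single_key (Finset.sum_nonneg fun k _ => mul_nonneg (hw k) (hA k))
    (Finset.sum_nonneg fun k _ => mul_nonneg (hw k) (hC k)) key hE'

/-- **Theorem 8, part 1 (trade-off bound).** The Hellinger distance between the
source-mixture label marginal and the target label marginal is bounded by the square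
root of the mixture source Hellinger loss, plus the Hellinger distance between the
pushed-forward target distribution and the pushed-forward source mixture, plus the
square root of the target Hellinger loss. -/
theorem tradeoff_lower_bound_general
    {X Z : Type*} [MeasurableSpace X] [MeasurableSpace Z]
    (μ : Measure X) (ν : Measure Z) [SigmaFinite μ] [SigmaFinite ν]
    (K C : ℕ) (hK : 0 < K) (hC : 0 < C)
    (w : Fin K → ℝ) (hw_nonneg : ∀ k, 0 ≤ w k) (hw_sum : ∑ k, w k = 1)
    -- source and target densities w.r.t. μ
    (pS : Fin K → X → ℝ) (pT : X → ℝ)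
    (hpS_meas : ∀ k, Measurable (pS k)) (hpS_nonneg : ∀ k x, 0 ≤ pS k x)
    (hpS_prob : ∀ k, ∫ x, pS k x ∂μ = 1)
    (hpT_meas : Measurable pT) (hpT_nonneg : ∀ x, 0 ≤ pT x)
    (hpT_prob : ∫ x, pT x ∂μ = 1)
    -- labeling functions
    (fS : Fin K → X → Fin C → ℝ) (fT : X → Fin C → ℝ)
    (hfS_meas : ∀ k, Measurable (fS k))
    (hfS_simplex : ∀ k x, fS k x ∈ stdSimplex ℝ (Fin C))
    (hfT_meas : Measurable fT) (hfT_simplex : ∀ x, fT x ∈ stdSimplex ℝ (Fin C))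
    -- feature map and hypothesis on the latent space
    (g : X → Z) (hg : Measurable g)
    (hhat : Z → Fin C → ℝ) (hhat_meas : Measurable hhat)
    (hhat_simplex : ∀ z, hhat z ∈ stdSimplex ℝ (Fin C))
    -- densities of the pushforward distributions w.r.t. ν
    (pgS : Fin K → Z → ℝ) (pgT : Z → ℝ)
    (hpgS_meas : ∀ k, Measurable (pgS k)) (hpgS_nonneg : ∀ k z, 0 ≤ pgS k z)
    (hpgT_meas : Measurable pgT) (hpgT_nonneg : ∀ z, 0 ≤ pgT z)
    (hmapS : ∀ k, Measure.map g (μ.withDensity fun x => ENNReal.ofReal (pS k x))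
      = ν.withDensity fun z => ENNReal.ofReal (pgS k z))
    (hmapT : Measure.map g (μ.withDensity fun x => ENNReal.ofReal (pT x))
      = ν.withDensity fun z => ENNReal.ofReal (pgT z))
    -- label marginals of the source mixture and the target domain
    (a b : Fin C → ℝ)
    (ha : ∀ y, a y = ∑ k, w k * ∫ x, fS k x y * pS k x ∂μ)
    (hb : ∀ y, b y = ∫ x, fT x y * pT x ∂μ)
    (ha_simplex : a ∈ stdSimplex ℝ (Fin C)) (hb_simplex : b ∈ stdSimplex ℝ (Fin C)) :
    Real.sqrt (2 * ∑ y, (Real.sqrt (a y) - Real.sqrt (b y)) ^ 2)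
      ≤ Real.sqrt (∑ k, w k *
            ∫ x, (2 * ∑ i, (Real.sqrt (hhat (g x) i) - Real.sqrt (fS k x i)) ^ 2)
              * pS k x ∂μ)
        + Real.sqrt (2 * ∫ z,
            (Real.sqrt (pgT z) - Real.sqrt (∑ k, w k * pgS k z)) ^ 2 ∂ν)
        + Real.sqrt (∫ x,
            (2 * ∑ i, (Real.sqrt (hhat (g x) i) - Real.sqrt (fT x i)) ^ 2)
              * pT x ∂μ) := by
  classical
  -- basic integrability of the densities on X
  have hpS_int : ∀ k, Integrable (pS k) μ := by
    intro k; by_contra hni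
    have h := hpS_prob k
    rw [integral_undef hni] at h
    exact one_ne_zero h.symm
  have hpT_int : Integrable pT μ := by
    by_contra hni
    rw [integral_undef hni] at hpT_prob
    exact one_ne_zero hpT_prob.symm
  -- simplex helpers
  have le_one : ∀ {v : Fin C → ℝ}, v ∈ stdSimplex ℝ (Fin C) → ∀ i, v i ≤ 1 := by
    intro v hv i
    rw [← hv.2]
    exact Finset.single_le_sum (fun j _ => hv.1 j) (Finset.mem_univ i)
  -- component measurability
  have mh : ∀ y, Measurable fun z => hhat z y :=
    fun y => (measurable_pi_apply y).comp hhat_meas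
  have mhg : ∀ y, Measurable fun x => hhat (g x) y := fun y => (mh y).comp hg
  have mfS : ∀ k y, Measurable fun x => fS k x y :=
    fun k y => (measurable_pi_apply y).comp (hfS_meas k)
  have mfT : ∀ y, Measurable fun x => fT x y :=
    fun y => (measurable_pi_apply y).comp hfT_meas
  -- bounds 0 ≤ · ≤ 1
  have hb01 : ∀ z y, 0 ≤ hhat z y ∧ hhat z y ≤ 1 :=
    fun z y => ⟨(hhat_simplex z).1 y, le_one (hhat_simplex z) y⟩
  have fS01 : ∀ k x y, 0 ≤ fS k x y ∧ fS k x y ≤ 1 :=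
    fun k x y => ⟨(hfS_simplex k x).1 y, le_one (hfS_simplex k x) y⟩
  have fT01 : ∀ x y, 0 ≤ fT x y ∧ fT x y ≤ 1 :=
    fun x y => ⟨(hfT_simplex x).1 y, le_one (hfT_simplex x) y⟩
  -- integrability of products on the X side
  have IfS : ∀ k y, Integrable (fun x => fS k x y * pS k x) μ := fun k y =>
    integrable_simplex_mul (hpS_int k) (hpS_nonneg k) (mfS k y).aestronglyMeasurable
      (fun x => (fS01 k x y).1) (fun x => (fS01 k x y).2)
  have IhS : ∀ k y, Integrable (fun x => hhat (g x) y * pS k x) μ := fun k y =>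
    integrable_simplex_mul (hpS_int k) (hpS_nonneg k) (mhg y).aestronglyMeasurable
      (fun x => (hb01 (g x) y).1) (fun x => (hb01 (g x) y).2)
  have ImixS : ∀ k y,
      Integrable (fun x => Real.sqrt (hhat (g x) y) * Real.sqrt (fS k x y) * pS k x) μ := by
    intro k y
    refine integrable_simplex_mul (hpS_int k) (hpS_nonneg k)
      (((mhg y).sqrt.mul (mfS k y).sqrt).aestronglyMeasurable) (fun x => ?_) (fun x => ?_)
    · exact mul_nonneg (Real.sqrt_nonneg _) (Real.sqrt_nonneg _)
    · exact mul_le_one₀ (Real.sqrt_le_one.mpr (hb01 (g x) y).2) (Real.sqrt_nonneg _)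
        (Real.sqrt_le_one.mpr (fS01 k x y).2)
  have IES : ∀ k y,
      Integrable (fun x => (Real.sqrt (hhat (g x) y) - Real.sqrt (fS k x y)) ^ 2 * pS k x) μ := by
    intro k y
    refine integrable_simplex_mul (hpS_int k) (hpS_nonneg k)
      ((((mhg y).sqrt.sub (mfS k y).sqrt).pow_const 2).aestronglyMeasurable)
      (fun x => sq_nonneg _) (fun x => ?_)
    have h1 := Real.sqrt_le_one.mpr (hb01 (g x) y).2
    have h2 := Real.sqrt_le_one.mpr (fS01 k x y).2
    have h3 := Real.sqrt_nonneg (hhat (g x) y)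
    have h4 := Real.sqrt_nonneg (fS k x y)
    nlinarith
  have IfT : ∀ y, Integrable (fun x => fT x y * pT x) μ := fun y =>
    integrable_simplex_mul hpT_int hpT_nonneg (mfT y).aestronglyMeasurable
      (fun x => (fT01 x y).1) (fun x => (fT01 x y).2)
  have IhT : ∀ y, Integrable (fun x => hhat (g x) y * pT x) μ := fun y =>
    integrable_simplex_mul hpT_int hpT_nonneg (mhg y).aestronglyMeasurable
      (fun x => (hb01 (g x) y).1) (fun x => (hb01 (g x) y).2)
  have ImixT : ∀ y,
      Integrable (fun x => Real.sqrt (hhat (g x) y) * Real.sqrt (fT x y) * pT x) μ := by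
    intro y
    refine integrable_simplex_mul hpT_int hpT_nonneg
      (((mhg y).sqrt.mul (mfT y).sqrt).aestronglyMeasurable) (fun x => ?_) (fun x => ?_)
    · exact mul_nonneg (Real.sqrt_nonneg _) (Real.sqrt_nonneg _)
    · exact mul_le_one₀ (Real.sqrt_le_one.mpr (hb01 (g x) y).2) (Real.sqrt_nonneg _)
        (Real.sqrt_le_one.mpr (fT01 x y).2)
  have IET : ∀ y,
      Integrable (fun x => (Real.sqrt (hhat (g x) y) - Real.sqrt (fT x y)) ^ 2 * pT x) μ := by
    intro y
    refine integrable_simplex_mul hpT_int hpT_nonneg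
      ((((mhg y).sqrt.sub (mfT y).sqrt).pow_const 2).aestronglyMeasurable)
      (fun x => sq_nonneg _) (fun x => ?_)
    have h1 := Real.sqrt_le_one.mpr (hb01 (g x) y).2
    have h2 := Real.sqrt_le_one.mpr (fT01 x y).2
    have h3 := Real.sqrt_nonneg (hhat (g x) y)
    have h4 := Real.sqrt_nonneg (fT x y)
    nlinarith
  -- integrability of the pushforward densities on Z
  have hpg_int : ∀ (p : X → ℝ) (pg : Z → ℝ), Measurable p → (∀ x, 0 ≤ p x) →
      Integrable p μ → (∫ x, p x ∂μ) = 1 → Measurable pg → (∀ z, 0 ≤ pg z) →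
      (Measure.map g (μ.withDensity fun x => ENNReal.ofReal (p x))
        = ν.withDensity fun z => ENNReal.ofReal (pg z)) → Integrable pg ν := by
    intro p pg hpm hp0 hpi hp1 hpgm hpg0 hmap
    have h0 : (ν.withDensity fun z => ENNReal.ofReal (pg z)) Set.univ
        = (μ.withDensity fun x => ENNReal.ofReal (p x)) Set.univ := by
      rw [← hmap, Measure.map_apply hg MeasurableSet.univ]
      simp
    rw [withDensity_apply _ MeasurableSet.univ, withDensity_apply _ MeasurableSet.univ,
      setLIntegral_univ, setLIntegral_univ] at h0
    have h1 : ∫⁻ x, ENNReal.ofReal (p x) ∂μ = ENNReal.ofReal 1 := by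
      rw [← hp1, ← ofReal_integral_eq_lintegral_ofReal hpi
        (Filter.Eventually.of_forall hp0)]
    refine ⟨hpgm.aestronglyMeasurable, ?_⟩
    rw [hasFiniteIntegral_iff_ofReal (Filter.Eventually.of_forall hpg0), h0, h1]
    exact ENNReal.ofReal_lt_top
  have hpgS_int : ∀ k, Integrable (pgS k) ν := fun k =>
    hpg_int (pS k) (pgS k) (hpS_meas k) (hpS_nonneg k) (hpS_int k) (hpS_prob k)
      (hpgS_meas k) (hpgS_nonneg k) (hmapS k)
  have hpgT_int : Integrable pgT ν :=
    hpg_int pT pgT hpT_meas hpT_nonneg hpT_int hpT_prob hpgT_meas hpgT_nonneg hmapT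
  -- the mixture density q on Z
  set q : Z → ℝ := fun z => ∑ k, w k * pgS k z with hq
  have hqz : ∀ z, (∑ k, w k * pgS k z) = q z := fun z => by rw [hq]
  have hq0 : ∀ z, 0 ≤ q z := fun z =>
    Finset.sum_nonneg fun k _ => mul_nonneg (hw_nonneg k) (hpgS_nonneg k z)
  have hq_meas : Measurable q :=
    Finset.measurable_sum _ (fun k _ => (hpgS_meas k).const_mul (w k))
  have hq_int : Integrable q ν :=
    integrable_finset_sum _ (fun k _ => (hpgS_int k).const_mul (w k))
  -- integrability on the Z side
  have Isq : Integrable (fun z => Real.sqrt (q z) * Real.sqrt (pgT z)) ν := by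
    refine Integrable.mono (hq_int.add hpgT_int)
      ((hq_meas.sqrt.mul hpgT_meas.sqrt).aestronglyMeasurable)
      (Filter.Eventually.of_forall fun z => ?_)
    simp only [Real.norm_eq_abs, Pi.add_apply]
    rw [abs_of_nonneg (mul_nonneg (Real.sqrt_nonneg _) (Real.sqrt_nonneg _)),
      abs_of_nonneg (by have h1 := hq0 z; have h2 := hpgT_nonneg z; linarith : (0:ℝ) ≤ q z + pgT z)]
    nlinarith [sq_nonneg (Real.sqrt (q z) - Real.sqrt (pgT z)),
      Real.sq_sqrt (hq0 z), Real.sq_sqrt (hpgT_nonneg z)]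
  have IE2 : Integrable (fun z => (Real.sqrt (q z) - Real.sqrt (pgT z)) ^ 2) ν := by
    refine Integrable.mono ((hq_int.add hpgT_int).const_mul 2)
      (((hq_meas.sqrt.sub hpgT_meas.sqrt).pow_const 2).aestronglyMeasurable)
      (Filter.Eventually.of_forall fun z => ?_)
    simp only [Real.norm_eq_abs, Pi.add_apply]
    rw [abs_of_nonneg (sq_nonneg _),
      abs_of_nonneg (by have h1 := hq0 z; have h2 := hpgT_nonneg z; linarith : (0:ℝ) ≤ 2 * (q z + pgT z))]
    nlinarith [Real.sq_sqrt (hq0 z), Real.sq_sqrt (hpgT_nonneg z),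
      sq_nonneg (Real.sqrt (q z) + Real.sqrt (pgT z))]
  have Ihq : ∀ y, Integrable (fun z => hhat z y * q z) ν := fun y =>
    integrable_simplex_mul hq_int hq0 (mh y).aestronglyMeasurable
      (fun z => (hb01 z y).1) (fun z => (hb01 z y).2)
  have IhpgT : ∀ y, Integrable (fun z => hhat z y * pgT z) ν := fun y =>
    integrable_simplex_mul hpgT_int hpgT_nonneg (mh y).aestronglyMeasurable
      (fun z => (hb01 z y).1) (fun z => (hb01 z y).2)
  have Ihmix : ∀ y,
      Integrable (fun z => hhat z y * (Real.sqrt (q z) * Real.sqrt (pgT z))) ν := fun y =>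
    integrable_simplex_mul Isq
      (fun z => mul_nonneg (Real.sqrt_nonneg _) (Real.sqrt_nonneg _))
      (mh y).aestronglyMeasurable (fun z => (hb01 z y).1) (fun z => (hb01 z y).2)
  have IhE : ∀ y,
      Integrable (fun z => hhat z y * (Real.sqrt (q z) - Real.sqrt (pgT z)) ^ 2) ν := fun y =>
    integrable_simplex_mul IE2 (fun z => sq_nonneg _)
      (mh y).aestronglyMeasurable (fun z => (hb01 z y).1) (fun z => (hb01 z y).2)
  -- transport identities
  have htransS : ∀ k y, ∫ x, hhat (g x) y * pS k x ∂μ = ∫ z, hhat z y * pgS k z ∂ν :=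
    fun k y => integral_comp_eq μ ν hg (hpS_meas k) (hpS_nonneg k) (hpgS_meas k)
      (hpgS_nonneg k) (hmapS k) (mh y)
  have htransT : ∀ y, ∫ x, hhat (g x) y * pT x ∂μ = ∫ z, hhat z y * pgT z ∂ν :=
    fun y => integral_comp_eq μ ν hg hpT_meas hpT_nonneg hpgT_meas
      hpgT_nonneg hmapT (mh y)
  -- intermediate label marginals
  set c : Fin C → ℝ := fun y => ∫ z, hhat z y * q z ∂ν with hc
  set d : Fin C → ℝ := fun y => ∫ z, hhat z y * pgT z ∂ν with hd
  have hcμ : ∀ y, c y = ∑ k, w k * ∫ x, hhat (g x) y * pS k x ∂μ := by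
    intro y
    have e1 : ∀ z, hhat z y * q z = ∑ k, w k * (hhat z y * pgS k z) := by
      intro z
      rw [hq]
      rw [Finset.mul_sum]
      exact Finset.sum_congr rfl fun k _ => by ring
    calc c y = ∫ z, ∑ k, w k * (hhat z y * pgS k z) ∂ν := by
          rw [hc]; exact integral_congr_ae (Filter.Eventually.of_forall e1)
      _ = ∑ k, ∫ z, w k * (hhat z y * pgS k z) ∂ν := by
          refine integral_finset_sum _ fun k _ => ?_
          exact (integrable_simplex_mul (hpgS_int k) (hpgS_nonneg k)
            (mh y).aestronglyMeasurable (fun z => (hb01 z y).1)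
            (fun z => (hb01 z y).2)).const_mul (w k)
      _ = ∑ k, w k * ∫ z, hhat z y * pgS k z ∂ν := by
          exact Finset.sum_congr rfl fun k _ => integral_const_mul _ _
      _ = ∑ k, w k * ∫ x, hhat (g x) y * pS k x ∂μ := by
          exact Finset.sum_congr rfl fun k _ => by rw [htransS k y]
  have hdμ : ∀ y, d y = ∫ x, hhat (g x) y * pT x ∂μ := fun y => by
    rw [hd]; exact (htransT y).symm
  -- nonnegativity of the marginals
  have ha0 : ∀ y, 0 ≤ a y := fun y => ha_simplex.1 y
  have hb0 : ∀ y, 0 ≤ b y := fun y => hb_simplex.1 y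
  have hc0 : ∀ y, 0 ≤ c y := fun y => by
    rw [hc]
    exact integral_nonneg fun z => mul_nonneg (hb01 z y).1 (hq0 z)
  have hd0 : ∀ y, 0 ≤ d y := fun y => by
    rw [hd]
    exact integral_nonneg fun z => mul_nonneg (hb01 z y).1 (hpgT_nonneg z)
  -- STEP B : per-class bound between a and c
  have SB : ∀ y, (Real.sqrt (a y) - Real.sqrt (c y)) ^ 2
      ≤ ∑ k, w k * ∫ x, (Real.sqrt (hhat (g x) y) - Real.sqrt (fS k x y)) ^ 2 * pS k x ∂μ := by
    intro y
    rw [ha y, hcμ y]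
    refine mixture_key w hw_nonneg
      (fun k => ∫ x, fS k x y * pS k x ∂μ)
      (fun k => ∫ x, hhat (g x) y * pS k x ∂μ)
      (fun k => ∫ x, Real.sqrt (hhat (g x) y) * Real.sqrt (fS k x y) * pS k x ∂μ)
      (fun k => ∫ x, (Real.sqrt (hhat (g x) y) - Real.sqrt (fS k x y)) ^ 2 * pS k x ∂μ)
      (fun k => integral_nonneg fun x => mul_nonneg (fS01 k x y).1 (hpS_nonneg k x))
      (fun k => integral_nonneg fun x => mul_nonneg (hb01 (g x) y).1 (hpS_nonneg k x))
      (fun k => ?_) (fun k => ?_)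
    · -- Cauchy-Schwarz
      have h1 := integral_sqrt_mul_sqrt_le μ (IfS k y).1 (IhS k y).1
        (fun x => mul_nonneg (fS01 k x y).1 (hpS_nonneg k x))
        (fun x => mul_nonneg (hb01 (g x) y).1 (hpS_nonneg k x)) (IfS k y) (IhS k y)
      refine le_trans (le_of_eq ?_) h1
      refine integral_congr_ae (Filter.Eventually.of_forall fun x => ?_)
      beta_reduce
      rw [Real.sqrt_mul (fS01 k x y).1, Real.sqrt_mul (hb01 (g x) y).1]
      have h2 : Real.sqrt (fS k x y) * Real.sqrt (pS k x) *
          (Real.sqrt (hhat (g x) y) * Real.sqrt (pS k x))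
          = Real.sqrt (hhat (g x) y) * Real.sqrt (fS k x y) *
            (Real.sqrt (pS k x) * Real.sqrt (pS k x)) := by ring
      rw [h2, Real.mul_self_sqrt (hpS_nonneg k x)]
    · -- expansion of the squared loss
      have pe : ∀ x, (Real.sqrt (hhat (g x) y) - Real.sqrt (fS k x y)) ^ 2 * pS k x
          = fS k x y * pS k x + hhat (g x) y * pS k x
            - 2 * (Real.sqrt (hhat (g x) y) * Real.sqrt (fS k x y) * pS k x) := by
        intro x
        rw [sub_sq, Real.sq_sqrt (hb01 (g x) y).1, Real.sq_sqrt (fS01 k x y).1]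
        ring
      calc ∫ x, (Real.sqrt (hhat (g x) y) - Real.sqrt (fS k x y)) ^ 2 * pS k x ∂μ
          = ∫ x, (fS k x y * pS k x + hhat (g x) y * pS k x
              - 2 * (Real.sqrt (hhat (g x) y) * Real.sqrt (fS k x y) * pS k x)) ∂μ :=
            integral_congr_ae (Filter.Eventually.of_forall pe)
        _ = (∫ x, fS k x y * pS k x ∂μ) + (∫ x, hhat (g x) y * pS k x ∂μ)
              - 2 * ∫ x, Real.sqrt (hhat (g x) y) * Real.sqrt (fS k x y) * pS k x ∂μ := by
            have Iadd : Integrable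
                (fun x => fS k x y * pS k x + hhat (g x) y * pS k x) μ :=
              (IfS k y).add (IhS k y)
            rw [integral_sub Iadd ((ImixS k y).const_mul 2),
              integral_add (IfS k y) (IhS k y), integral_const_mul]
  -- STEP D : per-class bound between d and b
  have SD : ∀ y, (Real.sqrt (d y) - Real.sqrt (b y)) ^ 2
      ≤ ∫ x, (Real.sqrt (hhat (g x) y) - Real.sqrt (fT x y)) ^ 2 * pT x ∂μ := by
    intro y
    rw [hdμ y, hb y]
    refine single_key
      (I := ∫ x, Real.sqrt (hhat (g x) y) * Real.sqrt (fT x y) * pT x ∂μ)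
      (integral_nonneg fun x => mul_nonneg (hb01 (g x) y).1 (hpT_nonneg x))
      (integral_nonneg fun x => mul_nonneg (fT01 x y).1 (hpT_nonneg x)) ?_ ?_
    · have h1 := integral_sqrt_mul_sqrt_le μ (IhT y).1 (IfT y).1
        (fun x => mul_nonneg (hb01 (g x) y).1 (hpT_nonneg x))
        (fun x => mul_nonneg (fT01 x y).1 (hpT_nonneg x)) (IhT y) (IfT y)
      refine le_trans (le_of_eq ?_) h1
      refine integral_congr_ae (Filter.Eventually.of_forall fun x => ?_)
      beta_reduce
      rw [Real.sqrt_mul (hb01 (g x) y).1, Real.sqrt_mul (fT01 x y).1]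
      have h2 : Real.sqrt (hhat (g x) y) * Real.sqrt (pT x) *
          (Real.sqrt (fT x y) * Real.sqrt (pT x))
          = Real.sqrt (hhat (g x) y) * Real.sqrt (fT x y) *
            (Real.sqrt (pT x) * Real.sqrt (pT x)) := by ring
      rw [h2, Real.mul_self_sqrt (hpT_nonneg x)]
    · have pe : ∀ x, (Real.sqrt (hhat (g x) y) - Real.sqrt (fT x y)) ^ 2 * pT x
          = hhat (g x) y * pT x + fT x y * pT x
            - 2 * (Real.sqrt (hhat (g x) y) * Real.sqrt (fT x y) * pT x) := by
        intro x
        rw [sub_sq, Real.sq_sqrt (hb01 (g x) y).1, Real.sq_sqrt (fT01 x y).1]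
        ring
      calc ∫ x, (Real.sqrt (hhat (g x) y) - Real.sqrt (fT x y)) ^ 2 * pT x ∂μ
          = ∫ x, (hhat (g x) y * pT x + fT x y * pT x
              - 2 * (Real.sqrt (hhat (g x) y) * Real.sqrt (fT x y) * pT x)) ∂μ :=
            integral_congr_ae (Filter.Eventually.of_forall pe)
        _ = (∫ x, hhat (g x) y * pT x ∂μ) + (∫ x, fT x y * pT x ∂μ)
              - 2 * ∫ x, Real.sqrt (hhat (g x) y) * Real.sqrt (fT x y) * pT x ∂μ := by
            have Iadd : Integrable
                (fun x => hhat (g x) y * pT x + fT x y * pT x) μ :=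
              (IhT y).add (IfT y)
            rw [integral_sub Iadd ((ImixT y).const_mul 2),
              integral_add (IhT y) (IfT y), integral_const_mul]
  -- STEP C : per-class bound between c and d
  have SC : ∀ y, (Real.sqrt (c y) - Real.sqrt (d y)) ^ 2
      ≤ ∫ z, hhat z y * (Real.sqrt (q z) - Real.sqrt (pgT z)) ^ 2 ∂ν := by
    intro y
    simp only [hc, hd]
    refine single_key
      (I := ∫ z, hhat z y * (Real.sqrt (q z) * Real.sqrt (pgT z)) ∂ν)
      (integral_nonneg fun z => mul_nonneg (hb01 z y).1 (hq0 z))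
      (integral_nonneg fun z => mul_nonneg (hb01 z y).1 (hpgT_nonneg z)) ?_ ?_
    · have h1 := integral_sqrt_mul_sqrt_le ν (Ihq y).1 (IhpgT y).1
        (fun z => mul_nonneg (hb01 z y).1 (hq0 z))
        (fun z => mul_nonneg (hb01 z y).1 (hpgT_nonneg z)) (Ihq y) (IhpgT y)
      refine le_trans (le_of_eq ?_) h1
      refine integral_congr_ae (Filter.Eventually.of_forall fun z => ?_)
      beta_reduce
      rw [Real.sqrt_mul (hb01 z y).1, Real.sqrt_mul (hb01 z y).1]
      have e2 : Real.sqrt (hhat z y) * Real.sqrt (hhat z y) = hhat z y :=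
        Real.mul_self_sqrt (hb01 z y).1
      linear_combination (-(Real.sqrt (q z) * Real.sqrt (pgT z))) * e2
    · have pe : ∀ z, hhat z y * (Real.sqrt (q z) - Real.sqrt (pgT z)) ^ 2
          = hhat z y * q z + hhat z y * pgT z
            - 2 * (hhat z y * (Real.sqrt (q z) * Real.sqrt (pgT z))) := by
        intro z
        rw [sub_sq, Real.sq_sqrt (hq0 z), Real.sq_sqrt (hpgT_nonneg z)]
        ring
      calc ∫ z, hhat z y * (Real.sqrt (q z) - Real.sqrt (pgT z)) ^ 2 ∂ν
          = ∫ z, (hhat z y * q z + hhat z y * pgT z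
              - 2 * (hhat z y * (Real.sqrt (q z) * Real.sqrt (pgT z)))) ∂ν :=
            integral_congr_ae (Filter.Eventually.of_forall pe)
        _ = (∫ z, hhat z y * q z ∂ν) + (∫ z, hhat z y * pgT z ∂ν)
              - 2 * ∫ z, hhat z y * (Real.sqrt (q z) * Real.sqrt (pgT z)) ∂ν := by
            have Iadd : Integrable
                (fun z => hhat z y * q z + hhat z y * pgT z) ν :=
              (Ihq y).add (IhpgT y)
            rw [integral_sub Iadd ((Ihmix y).const_mul 2),
              integral_add (Ihq y) (IhpgT y), integral_const_mul]
  -- Summed versions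
  have SBsum : 2 * ∑ y, (Real.sqrt (a y) - Real.sqrt (c y)) ^ 2
      ≤ ∑ k, w k * ∫ x,
          (2 * ∑ i, (Real.sqrt (hhat (g x) i) - Real.sqrt (fS k x i)) ^ 2) * pS k x ∂μ := by
    have h1 : ∑ y, (Real.sqrt (a y) - Real.sqrt (c y)) ^ 2
        ≤ ∑ y, ∑ k, w k *
            ∫ x, (Real.sqrt (hhat (g x) y) - Real.sqrt (fS k x y)) ^ 2 * pS k x ∂μ :=
      Finset.sum_le_sum fun y _ => SB y
    have h2 : ∑ y : Fin C, ∑ k, w k *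
          ∫ x, (Real.sqrt (hhat (g x) y) - Real.sqrt (fS k x y)) ^ 2 * pS k x ∂μ
        = ∑ k, w k * ∫ x,
            (∑ i, (Real.sqrt (hhat (g x) i) - Real.sqrt (fS k x i)) ^ 2) * pS k x ∂μ := by
      rw [Finset.sum_comm]
      refine Finset.sum_congr rfl fun k _ => ?_
      rw [← Finset.mul_sum]
      congr 1
      rw [← integral_finset_sum _ (fun i _ => IES k i)]
      refine integral_congr_ae (Filter.Eventually.of_forall fun x => ?_)
      beta_reduce
      rw [Finset.sum_mul]
    have h3 : ∀ k, ∫ x,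
          (2 * ∑ i, (Real.sqrt (hhat (g x) i) - Real.sqrt (fS k x i)) ^ 2) * pS k x ∂μ
        = 2 * ∫ x, (∑ i, (Real.sqrt (hhat (g x) i) - Real.sqrt (fS k x i)) ^ 2)
            * pS k x ∂μ := by
      intro k
      rw [← integral_const_mul]
      exact integral_congr_ae (Filter.Eventually.of_forall fun x => by ring)
    calc 2 * ∑ y, (Real.sqrt (a y) - Real.sqrt (c y)) ^ 2
        ≤ 2 * ∑ k, w k * ∫ x,
            (∑ i, (Real.sqrt (hhat (g x) i) - Real.sqrt (fS k x i)) ^ 2) * pS k x ∂μ := by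
          rw [h2] at h1; linarith
      _ = ∑ k, w k * ∫ x,
            (2 * ∑ i, (Real.sqrt (hhat (g x) i) - Real.sqrt (fS k x i)) ^ 2)
              * pS k x ∂μ := by
          rw [Finset.mul_sum]
          exact Finset.sum_congr rfl fun k _ => by rw [h3 k]; ring
  have SDsum : 2 * ∑ y, (Real.sqrt (d y) - Real.sqrt (b y)) ^ 2
      ≤ ∫ x, (2 * ∑ i, (Real.sqrt (hhat (g x) i) - Real.sqrt (fT x i)) ^ 2) * pT x ∂μ := by
    have h1 : ∑ y, (Real.sqrt (d y) - Real.sqrt (b y)) ^ 2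
        ≤ ∑ y : Fin C, ∫ x,
            (Real.sqrt (hhat (g x) y) - Real.sqrt (fT x y)) ^ 2 * pT x ∂μ :=
      Finset.sum_le_sum fun y _ => SD y
    have h2 : ∑ y : Fin C, ∫ x,
          (Real.sqrt (hhat (g x) y) - Real.sqrt (fT x y)) ^ 2 * pT x ∂μ
        = ∫ x, (∑ i, (Real.sqrt (hhat (g x) i) - Real.sqrt (fT x i)) ^ 2) * pT x ∂μ := by
      rw [← integral_finset_sum _ (fun i _ => IET i)]
      refine integral_congr_ae (Filter.Eventually.of_forall fun x => ?_)
      beta_reduce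
      rw [Finset.sum_mul]
    have h3 : ∫ x, (2 * ∑ i, (Real.sqrt (hhat (g x) i) - Real.sqrt (fT x i)) ^ 2) * pT x ∂μ
        = 2 * ∫ x, (∑ i, (Real.sqrt (hhat (g x) i) - Real.sqrt (fT x i)) ^ 2) * pT x ∂μ := by
      rw [← integral_const_mul]
      exact integral_congr_ae (Filter.Eventually.of_forall fun x => by ring)
    rw [h2] at h1
    rw [h3]
    linarith
  have SCsum : 2 * ∑ y, (Real.sqrt (c y) - Real.sqrt (d y)) ^ 2
      ≤ 2 * ∫ z, (Real.sqrt (pgT z) - Real.sqrt (q z)) ^ 2 ∂ν := by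
    have h1 : ∑ y, (Real.sqrt (c y) - Real.sqrt (d y)) ^ 2
        ≤ ∑ y : Fin C, ∫ z, hhat z y * (Real.sqrt (q z) - Real.sqrt (pgT z)) ^ 2 ∂ν :=
      Finset.sum_le_sum fun y _ => SC y
    have h2 : ∑ y : Fin C, ∫ z, hhat z y * (Real.sqrt (q z) - Real.sqrt (pgT z)) ^ 2 ∂ν
        = ∫ z, (Real.sqrt (pgT z) - Real.sqrt (q z)) ^ 2 ∂ν := by
      rw [← integral_finset_sum _ (fun y _ => IhE y)]
      refine integral_congr_ae (Filter.Eventually.of_forall fun z => ?_)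
      beta_reduce
      rw [← Finset.sum_mul, (hhat_simplex z).2, one_mul]
      ring
    rw [h2] at h1
    linarith
  -- triangle inequality in Euclidean space
  have tri : Real.sqrt (∑ y, (Real.sqrt (a y) - Real.sqrt (b y)) ^ 2)
      ≤ Real.sqrt (∑ y, (Real.sqrt (a y) - Real.sqrt (c y)) ^ 2)
        + Real.sqrt (∑ y, (Real.sqrt (c y) - Real.sqrt (d y)) ^ 2)
        + Real.sqrt (∑ y, (Real.sqrt (d y) - Real.sqrt (b y)) ^ 2) := by
    have e : ∀ u v : EuclideanSpace ℝ (Fin C),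
        dist u v = Real.sqrt (∑ y, (u y - v y) ^ 2) := by
      intro u v
      rw [EuclideanSpace.dist_eq]
      congr 1
      exact Finset.sum_congr rfl fun y _ => by rw [Real.dist_eq, sq_abs]
    have h := dist_triangle4 (α := EuclideanSpace ℝ (Fin C))
      (WithLp.toLp 2 fun y => Real.sqrt (a y)) (WithLp.toLp 2 fun y => Real.sqrt (c y))
      (WithLp.toLp 2 fun y => Real.sqrt (d y)) (WithLp.toLp 2 fun y => Real.sqrt (b y))
    rw [e, e, e, e] at h
    exact h
  -- final assembly
  have t1 : Real.sqrt (2 * ∑ y, (Real.sqrt (a y) - Real.sqrt (c y)) ^ 2)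
      ≤ Real.sqrt (∑ k, w k * ∫ x,
          (2 * ∑ i, (Real.sqrt (hhat (g x) i) - Real.sqrt (fS k x i)) ^ 2)
            * pS k x ∂μ) := Real.sqrt_le_sqrt SBsum
  have t2 : Real.sqrt (2 * ∑ y, (Real.sqrt (c y) - Real.sqrt (d y)) ^ 2)
      ≤ Real.sqrt (2 * ∫ z, (Real.sqrt (pgT z) - Real.sqrt (q z)) ^ 2 ∂ν) :=
    Real.sqrt_le_sqrt SCsum
  have t3 : Real.sqrt (2 * ∑ y, (Real.sqrt (d y) - Real.sqrt (b y)) ^ 2)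
      ≤ Real.sqrt (∫ x,
          (2 * ∑ i, (Real.sqrt (hhat (g x) i) - Real.sqrt (fT x i)) ^ 2)
            * pT x ∂μ) := Real.sqrt_le_sqrt SDsum
  have goal2 : Real.sqrt (2 * ∫ z, (Real.sqrt (pgT z)
      - Real.sqrt (∑ k, w k * pgS k z)) ^ 2 ∂ν)
      = Real.sqrt (2 * ∫ z, (Real.sqrt (pgT z) - Real.sqrt (q z)) ^ 2 ∂ν) := by
    simp only [hqz]
  rw [goal2]
  calc Real.sqrt (2 * ∑ y, (Real.sqrt (a y) - Real.sqrt (b y)) ^ 2)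
      = Real.sqrt 2 * Real.sqrt (∑ y, (Real.sqrt (a y) - Real.sqrt (b y)) ^ 2) :=
        Real.sqrt_mul (by norm_num) _
    _ ≤ Real.sqrt 2 * (Real.sqrt (∑ y, (Real.sqrt (a y) - Real.sqrt (c y)) ^ 2)
          + Real.sqrt (∑ y, (Real.sqrt (c y) - Real.sqrt (d y)) ^ 2)
          + Real.sqrt (∑ y, (Real.sqrt (d y) - Real.sqrt (b y)) ^ 2)) :=
        mul_le_mul_of_nonneg_left tri (Real.sqrt_nonneg 2)
    _ = Real.sqrt (2 * ∑ y, (Real.sqrt (a y) - Real.sqrt (c y)) ^ 2)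
          + Real.sqrt (2 * ∑ y, (Real.sqrt (c y) - Real.sqrt (d y)) ^ 2)
          + Real.sqrt (2 * ∑ y, (Real.sqrt (d y) - Real.sqrt (b y)) ^ 2) := by
        rw [Real.sqrt_mul (by norm_num : (0:ℝ) ≤ 2),
          Real.sqrt_mul (by norm_num : (0:ℝ) ≤ 2),
          Real.sqrt_mul (by norm_num : (0:ℝ) ≤ 2)]
        ring
    _ ≤ _ := add_le_add (add_le_add t1 t2) t3
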